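/- For the CSMA Markov chain on independent sets Λ with activation probabilities p_i ∈ (0,1), transition probabilities P(χ, χ') given by Eqn. (32) (a sum over control schedules z containing the symmetric difference χ △ χ', of ρ(z)·Π_{i∈χ/χ'}(1−p_i)·Π_{i∈χ'/χ} p_i·Π_{i∈z∩(χ∩χ')} p_i·Π_{i∈z/(χ∪χ')/C(χ∪χ')}(1−p_i)), and π(χ) = (1/H)·Π_{i∈χ} p_i/(1−p_i): the detailed balance equation π(χ)·P(χ, χ') = π(χ')·P(χ', χ) holds for all χ, χ' ∈ Λ, so the chain is reversible with stationary distribution π. -/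

import Mathlib

open Finset

lemma key15 {E : Type*} [DecidableEq E] (p : E → ℝ) (h : ∀ i, (1:ℝ) - p i ≠ 0)
    (s t : Finset E) :
    (∏ i ∈ s, p i / (1 - p i)) * ∏ i ∈ s \ t, (1 - p i) =
      (∏ i ∈ s ∩ t, p i / (1 - p i)) * ∏ i ∈ s \ t, p i := by
  rw [← Finset.prod_inter_mul_prod_diff s t (fun i => p i / (1 - p i)), mul_assoc,
    ← Finset.prod_mul_distrib]
  congr 1
  apply Finset.prod_congr rfl
  intro i _
  exact div_mul_cancel₀ _ (h i)

/-- Detailed balance for the CSMA Markov chain: with the product-form distribution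
`π(χ) ∝ ∏_{i∈χ} p_i/(1-p_i)` and the transition probabilities of Eqn. (32),
`π(χ)P(χ,χ') = π(χ')P(χ',χ)` for all collision-free schedules `χ, χ'`. -/
theorem stmt15 {E : Type*} [Fintype E] [DecidableEq E]
    (C : E → Finset E) (Λ Zs : Finset (Finset E)) (hZΛ : Zs ⊆ Λ)
    (ρ : Finset E → ℝ) (hρpos : ∀ z ∈ Zs, 0 < ρ z) (hρsum : ∑ z ∈ Zs, ρ z = 1)
    (p : E → ℝ) (hp : ∀ i, p i ∈ Set.Ioo (0 : ℝ) 1)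
    (H : ℝ) (hH : H = ∑ χ ∈ Λ, ∏ i ∈ χ, p i / (1 - p i))
    (P : Finset E → Finset E → ℝ)
    (hP : ∀ χ χ' : Finset E, P χ χ' =
      ∑ z ∈ Zs.filter (fun z => symmDiff χ χ' ⊆ z),
        ρ z * (∏ i ∈ χ \ χ', (1 - p i)) * (∏ i ∈ χ' \ χ, p i) *
          (∏ i ∈ z ∩ (χ ∩ χ'), p i) *
          (∏ i ∈ (z \ (χ ∪ χ')) \ ((χ ∪ χ').biUnion C), (1 - p i)))
    (χ χ' : Finset E) (hχ : χ ∈ Λ) (hχ' : χ' ∈ Λ) :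
    ((∏ i ∈ χ, p i / (1 - p i)) / H) * P χ χ' =
      ((∏ i ∈ χ', p i / (1 - p i)) / H) * P χ' χ := by
  have h1 : ∀ i, (1:ℝ) - p i ≠ 0 := fun i => by have := (hp i).2; linarith
  rw [hP, hP, Finset.mul_sum, Finset.mul_sum, symmDiff_comm χ' χ,
    inter_comm χ' χ, union_comm χ' χ]
  apply Finset.sum_congr rfl
  intro z _
  have k1 := key15 p h1 χ χ'
  have k2 := key15 p h1 χ' χ
  rw [inter_comm χ' χ] at k2
  rw [div_mul_eq_mul_div, div_mul_eq_mul_div]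
  congr 1
  linear_combination (ρ z * (∏ i ∈ χ' \ χ, p i) * (∏ i ∈ z ∩ (χ ∩ χ'), p i) *
      (∏ i ∈ (z \ (χ ∪ χ')) \ ((χ ∪ χ').biUnion C), (1 - p i))) * k1 -
    (ρ z * (∏ i ∈ χ \ χ', p i) * (∏ i ∈ z ∩ (χ ∩ χ'), p i) *
      (∏ i ∈ (z \ (χ ∪ χ')) \ ((χ ∪ χ').biUnion C), (1 - p i))) * k2
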